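/- If X_1,…,X_n forms a Markov chain and K = {1}, then a rate R is achievable if and only if R ≤ (1/n) ∑_{i=1}^{n} ∑_{a∈𝒳} min_{u} P(X_i = a | X_1 = u), where the minimum is over u ∈ 𝒳 with P(X_1 = u) > 0. -/

import Mathlib

open Finset
open scoped Classical

noncomputable section

namespace GenotypeHiding

variable {X : Type} [Fintype X] [DecidableEq X]

/-- `y` agrees with the history `h` on all coordinates `j` with `j < t`
(i.e. the event `Y_{[t]} = h_{[t]}`, zero-based). -/
def agreeN {n : ℕ} (t : ℕ) (y h : Fin n → Option X) : Prop :=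
  ∀ j : Fin n, (j : ℕ) < t → y j = h j

/-- `P(X = x, Y_{[t]} = h_{[t]})` under the joint law `J` of `(X, Y)`. -/
def prXH {n : ℕ} (J : (Fin n → X) → (Fin n → Option X) → ℝ) (t : ℕ)
    (x : Fin n → X) (h : Fin n → Option X) : ℝ :=
  ∑ y : Fin n → Option X, if agreeN t y h then J x y else 0

/-- `P(Y_i = b, X = x, Y_{[t]} = h_{[t]})` under the joint law `J`. -/
def prXHY {n : ℕ} (J : (Fin n → X) → (Fin n → Option X) → ℝ) (t : ℕ)
    (x : Fin n → X) (h : Fin n → Option X) (i : Fin n) (b : Option X) : ℝ :=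
  ∑ y : Fin n → Option X, if y i = b ∧ agreeN t y h then J x y else 0

/-- `P(Y_{[t]} = h_{[t]})` under the joint law `J`. -/
def prH {n : ℕ} (J : (Fin n → X) → (Fin n → Option X) → ℝ) (t : ℕ)
    (h : Fin n → Option X) : ℝ :=
  ∑ x : Fin n → X, prXH J t x h

/-- `P(X_{i₀} = u, Y_{[t]} = h_{[t]})` under the joint law `J` (here `i₀` is the single
sensitive position). -/
def pr1H {n : ℕ} (J : (Fin n → X) → (Fin n → Option X) → ℝ) (i₀ : Fin n) (t : ℕ)
    (u : X) (h : Fin n → Option X) : ℝ :=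
  ∑ x : Fin n → X, ∑ y : Fin n → Option X,
    if x i₀ = u ∧ agreeN t y h then J x y else 0

/-- `P(X_i = a, X_{i₀} = u, Y_{[t]} = h_{[t]})` under the joint law `J`. -/
def prI1H {n : ℕ} (J : (Fin n → X) → (Fin n → Option X) → ℝ) (i₀ : Fin n) (t : ℕ)
    (i : Fin n) (a : X) (u : X) (h : Fin n → Option X) : ℝ :=
  ∑ x : Fin n → X, ∑ y : Fin n → Option X,
    if x i = a ∧ x i₀ = u ∧ agreeN t y h then J x y else 0

/-- `P(X_i = a | X_{i₀} = u, Y_{[t]} = h_{[t]})` under the joint law `J`. -/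
def cond1 {n : ℕ} (J : (Fin n → X) → (Fin n → Option X) → ℝ) (i₀ : Fin n) (t : ℕ)
    (i : Fin n) (a : X) (u : X) (h : Fin n → Option X) : ℝ :=
  prI1H J i₀ t i a u h / pr1H J i₀ t u h

/-- `min_u P(X_i = a | X_{i₀} = u, Y_{[t]} = h_{[t]})`, the minimum being over all `u` with
`P(X_{i₀} = u, Y_{[t]} = h_{[t]}) > 0`. -/
def minC1 {n : ℕ} (J : (Fin n → X) → (Fin n → Option X) → ℝ) (i₀ : Fin n) (t : ℕ)
    (i : Fin n) (a : X) (h : Fin n → Option X) : ℝ :=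
  sInf {r : ℝ | ∃ u : X, 0 < pr1H J i₀ t u h ∧ r = cond1 J i₀ t i a u h}

/-- `J` is the joint law of `(X, Y)` where `Y` is generated from `X ∼ p` by the sequential
privacy mechanism with the single sensitive position `K = {i₀}`. -/
def IsSequentialMechanism1 {n : ℕ} (p : (Fin n → X) → ℝ) (i₀ : Fin n)
    (J : (Fin n → X) → (Fin n → Option X) → ℝ) : Prop :=
  (∀ x y, 0 ≤ J x y) ∧
  (∀ x, ∑ y : Fin n → Option X, J x y = p x) ∧
  (∀ x y, 0 < J x y → ∀ i : Fin n, y i = some (x i) ∨ y i = none) ∧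
  (∀ (i : Fin n) (x : Fin n → X) (h : Fin n → Option X), 0 < prXH J (i : ℕ) x h →
    prXHY J (i : ℕ) x h i (some (x i))
      = (minC1 J i₀ (i : ℕ) i (x i) h / cond1 J i₀ (i : ℕ) i (x i) (x i₀) h)
          * prXH J (i : ℕ) x h)

/-- `P(X_{[t]} = v_{[t]})`: the probability that the first `t` coordinates of `X` agree
with `v`. -/
def prPre {n : ℕ} (p : (Fin n → X) → ℝ) (t : ℕ) (v : Fin n → X) : ℝ :=
  ∑ x : Fin n → X, if (∀ j : Fin n, (j : ℕ) < t → x j = v j) then p x else 0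

/-- `P(X_i = a)`. -/
def prOne {n : ℕ} (p : (Fin n → X) → ℝ) (i : Fin n) (a : X) : ℝ :=
  ∑ x : Fin n → X, if x i = a then p x else 0

/-- `P(X_i = a ∧ X_{i'} = a')`. -/
def prTwo {n : ℕ} (p : (Fin n → X) → ℝ) (i i' : Fin n) (a a' : X) : ℝ :=
  ∑ x : Fin n → X, if x i = a ∧ x i' = a' then p x else 0

/-- `X_1 → X_2 → ⋯ → X_n` is a Markov chain: for every `t`,
`P(X_{[t+2]}) ⋅ P(X_{t+1}) = P(X_{[t+1]}) ⋅ P(X_{t+1}, X_{t+2})` (zero-based indices),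
which is the cross-multiplied form of the chain rule factorization. -/
def IsMarkov {n : ℕ} (p : (Fin n → X) → ℝ) : Prop :=
  ∀ (t : ℕ) (ht : t + 1 < n) (v : Fin n → X),
    prPre p (t + 2) v * prOne p ⟨t, by omega⟩ (v ⟨t, by omega⟩)
      = prPre p (t + 1) v
          * prTwo p ⟨t, by omega⟩ ⟨t + 1, ht⟩ (v ⟨t, by omega⟩) (v ⟨t + 1, ht⟩)


/-- `min_u P(X_i = a | X_{i₀} = u)`, the minimum over all `u ∈ 𝒳` with `P(X_{i₀} = u) > 0`. -/
def minCondMC {n : ℕ} (p : (Fin n → X) → ℝ) (i₀ : Fin n) (i : Fin n) (a : X) : ℝ :=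
  sInf {r : ℝ | ∃ u : X, 0 < prOne p i₀ u ∧ r = prTwo p i₀ i u a / prOne p i₀ u}

/-- Number of erasures `e(y) = #{i : y_i = ∗}` in an output sequence. -/
def numErasures {n : ℕ} (y : Fin n → Option X) : ℕ :=
  (Finset.univ.filter (fun i : Fin n => y i = none)).card

-- ===== auxiliary machinery =====


section Basic

variable {n : ℕ} {p : (Fin n → X) → ℝ}

/-- collapse a sum of an `if (w = w₀ ∧ c)` over a fintype -/
lemma sum_if_unique' {β : Type*} [Fintype β] (P : β → Prop) [DecidablePred P] (c : Prop)
    [Decidable c] (w0 : β)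
    (h : ∀ w, P w ↔ (w = w0 ∧ c)) (f : β → ℝ) :
    ∑ w : β, (if P w then f w else 0) = if c then f w0 else 0 := by
  classical
  rw [Finset.sum_eq_single w0]
  · by_cases hc : c
    · simp [h, hc]
    · simp [h, hc]
  · intro b _ hb
    rw [if_neg]
    rw [h]
    rintro ⟨rfl, -⟩; exact hb rfl
  · intro hb; exact absurd (Finset.mem_univ w0) hb

lemma fiber_sum (i : Fin n) (F : (Fin n → X) → ℝ) :
    ∑ x : Fin n → X, F x = ∑ u : X, ∑ x : Fin n → X, if x i = u then F x else 0 := by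
  rw [Finset.sum_comm]
  apply Finset.sum_congr rfl
  intro x _
  rw [Finset.sum_ite_eq Finset.univ (x i) (fun _ => F x)]
  simp

lemma prOne_nonneg (hp0 : ∀ x, 0 ≤ p x) (i : Fin n) (a : X) : 0 ≤ prOne p i a :=
  Finset.sum_nonneg fun x _ => by by_cases h : x i = a <;> simp [prOne, h, hp0 x]

lemma prTwo_nonneg (hp0 : ∀ x, 0 ≤ p x) (i i' : Fin n) (a a' : X) : 0 ≤ prTwo p i i' a a' :=
  Finset.sum_nonneg fun x _ => by by_cases h : x i = a ∧ x i' = a' <;> simp [prTwo, h, hp0 x]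

lemma prTwo_le_prOne_left (hp0 : ∀ x, 0 ≤ p x) (i i' : Fin n) (a a' : X) :
    prTwo p i i' a a' ≤ prOne p i a := by
  apply Finset.sum_le_sum
  intro x _
  by_cases h : x i = a ∧ x i' = a'
  · rw [if_pos h, if_pos h.1]
  · rw [if_neg h]
    by_cases h1 : x i = a <;> simp [h1, hp0 x]

lemma prTwo_le_prOne_right (hp0 : ∀ x, 0 ≤ p x) (i i' : Fin n) (a a' : X) :
    prTwo p i i' a a' ≤ prOne p i' a' := by
  apply Finset.sum_le_sum
  intro x _
  by_cases h : x i = a ∧ x i' = a'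
  · rw [if_pos h, if_pos h.2]
  · rw [if_neg h]
    by_cases h1 : x i' = a' <;> simp [h1, hp0 x]

lemma sum_prTwo_right (i i' : Fin n) (a : X) :
    ∑ a' : X, prTwo p i i' a a' = prOne p i a := by
  unfold prTwo prOne
  rw [Finset.sum_comm]
  apply Finset.sum_congr rfl
  intro x _
  by_cases h : x i = a
  · rw [Finset.sum_eq_single (x i')]
    · simp [h]
    · intro b _ hb; rw [if_neg]; rintro ⟨-, h2⟩; exact hb h2.symm
    · intro hb; exact absurd (Finset.mem_univ _) hb
  · simp [h]

lemma sum_prOne (hp1 : ∑ x : Fin n → X, p x = 1) (i : Fin n) :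
    ∑ u : X, prOne p i u = 1 := by
  unfold prOne
  rw [Finset.sum_comm]
  rw [← hp1]
  apply Finset.sum_congr rfl
  intro x _
  rw [Finset.sum_ite_eq Finset.univ (x i) (fun _ => p x)]
  simp

lemma p_le_prOne (hp0 : ∀ x, 0 ≤ p x) (i : Fin n) (x : Fin n → X) :
    p x ≤ prOne p i (x i) := by
  have := Finset.single_le_sum (f := fun x' : Fin n → X => if x' i = x i then p x' else 0)
    (fun x' _ => by by_cases h : x' i = x i <;> simp [h, hp0 x']) (Finset.mem_univ x)
  simpa [prOne] using this

lemma p_eq_zero_of_prOne (hp0 : ∀ x, 0 ≤ p x) {i : Fin n} {x : Fin n → X} {b : X}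
    (hxi : x i = b) (h : prOne p i b = 0) : p x = 0 := by
  have h1 := p_le_prOne hp0 i x
  rw [hxi, h] at h1
  exact le_antisymm h1 (hp0 x)

lemma exists_prOne_pos (hp0 : ∀ x, 0 ≤ p x) (hp1 : ∑ x : Fin n → X, p x = 1) (i : Fin n) :
    ∃ u : X, 0 < prOne p i u := by
  by_contra h
  push_neg at h
  have hz : ∀ u : X, prOne p i u = 0 := fun u => le_antisymm (h u) (prOne_nonneg hp0 i u)
  have := sum_prOne hp1 i
  rw [Finset.sum_congr rfl (fun u _ => hz u)] at this
  simp at this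

lemma minCond_set_nonempty (hp0 : ∀ x, 0 ≤ p x) (hp1 : ∑ x : Fin n → X, p x = 1)
    (i₀ i : Fin n) (a : X) :
    {r : ℝ | ∃ u : X, 0 < prOne p i₀ u ∧ r = prTwo p i₀ i u a / prOne p i₀ u}.Nonempty := by
  obtain ⟨u, hu⟩ := exists_prOne_pos hp0 hp1 i₀
  exact ⟨_, u, hu, rfl⟩

lemma minCond_bddBelow (hp0 : ∀ x, 0 ≤ p x) (i₀ i : Fin n) (a : X) :
    BddBelow {r : ℝ | ∃ u : X, 0 < prOne p i₀ u ∧ r = prTwo p i₀ i u a / prOne p i₀ u} := by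
  refine ⟨0, ?_⟩
  rintro r ⟨u, hu, rfl⟩
  exact div_nonneg (prTwo_nonneg hp0 _ _ _ _) hu.le

lemma minCondMC_nonneg (hp0 : ∀ x, 0 ≤ p x) (hp1 : ∑ x : Fin n → X, p x = 1)
    (i₀ i : Fin n) (a : X) : 0 ≤ minCondMC p i₀ i a := by
  apply le_csInf (minCond_set_nonempty hp0 hp1 i₀ i a)
  rintro r ⟨u, hu, rfl⟩
  exact div_nonneg (prTwo_nonneg hp0 _ _ _ _) hu.le

lemma minCondMC_le (hp0 : ∀ x, 0 ≤ p x) {i₀ : Fin n} (i : Fin n) (a : X) {u : X}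
    (hu : 0 < prOne p i₀ u) :
    minCondMC p i₀ i a ≤ prTwo p i₀ i u a / prOne p i₀ u :=
  csInf_le (minCond_bddBelow hp0 i₀ i a) ⟨u, hu, rfl⟩

lemma le_minCondMC (hp0 : ∀ x, 0 ≤ p x) (hp1 : ∑ x : Fin n → X, p x = 1)
    {i₀ : Fin n} (i : Fin n) (a : X) {r : ℝ}
    (h : ∀ u : X, 0 < prOne p i₀ u → r ≤ prTwo p i₀ i u a / prOne p i₀ u) :
    r ≤ minCondMC p i₀ i a := by
  apply le_csInf (minCond_set_nonempty hp0 hp1 i₀ i a)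
  rintro s ⟨u, hu, rfl⟩
  exact h u hu

lemma minCondMC_eq_zero (hp0 : ∀ x, 0 ≤ p x) (hp1 : ∑ x : Fin n → X, p x = 1)
    {i₀ i : Fin n} {a : X} (h : prOne p i a = 0) : minCondMC p i₀ i a = 0 := by
  refine le_antisymm ?_ (minCondMC_nonneg hp0 hp1 i₀ i a)
  obtain ⟨u, hu⟩ := exists_prOne_pos hp0 hp1 i₀
  have h2 : prTwo p i₀ i u a = 0 := by
    refine le_antisymm ?_ (prTwo_nonneg hp0 _ _ _ _)
    rw [← h]; exact prTwo_le_prOne_right hp0 _ _ _ _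
  calc minCondMC p i₀ i a ≤ prTwo p i₀ i u a / prOne p i₀ u := minCondMC_le hp0 i a hu
  _ = 0 := by rw [h2, zero_div]

end Basic

-- ====================== the mechanism ======================

section Mech

variable {n : ℕ}

def QQ (hn : 1 ≤ n) (p : (Fin n → X) → ℝ) (t : ℕ) (u a : X) : ℝ :=
  if h : t < n then prTwo p ⟨0, hn⟩ ⟨t, h⟩ u a else 0

def P1 (hn : 1 ≤ n) (p : (Fin n → X) → ℝ) (u : X) : ℝ := prOne p ⟨0, hn⟩ u

def mm (hn : 1 ≤ n) (p : (Fin n → X) → ℝ) (t : ℕ) (a : X) : ℝ :=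
  if h : t < n then minCondMC p ⟨0, hn⟩ ⟨t, h⟩ a else 0

def TrN (p : (Fin n → X) → ℝ) (t : ℕ) (b a : X) : ℝ :=
  if h : t + 1 < n then
    prTwo p ⟨t, by omega⟩ ⟨t + 1, h⟩ b a / prOne p ⟨t, by omega⟩ b
  else 0

def gg (hn : 1 ≤ n) (p : (Fin n → X) → ℝ) : ℕ → X → ℝ
  | 0 => fun _ => 0
  | t + 1 => fun a => ∑ b : X, mm hn p t b * TrN p t b a

def rr (hn : 1 ≤ n) (p : (Fin n → X) → ℝ) (t : ℕ) (u a : X) : ℝ :=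
  max 0 (min 1 ((mm hn p t a - gg hn p t a) / (QQ hn p t u a / P1 hn p u - gg hn p t a)))

def rho (hn : 1 ≤ n) (p : (Fin n → X) → ℝ) (t : ℕ) (x : Fin n → X) : ℝ :=
  if h : t < n then rr hn p t (x ⟨0, hn⟩) (x ⟨t, h⟩) else 0

def pf (hn : 1 ≤ n) (p : (Fin n → X) → ℝ) : ℕ → (Fin n → X) → ℝ
  | 0 => fun _ => 1
  | t + 1 => fun x => pf hn p t x * (1 - rho hn p t x)

def revFrom (t : ℕ) (x : Fin n → X) : Fin n → Option X :=
  fun j => if t ≤ (j : ℕ) then some (x j) else none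

def Wm (hn : 1 ≤ n) (p : (Fin n → X) → ℝ) (x : Fin n → X) (y : Fin n → Option X) : ℝ :=
  (∑ t ∈ Finset.range n, if y = revFrom t x then pf hn p t x * rho hn p t x else 0)
  + (if y = (fun _ => none) then pf hn p n x else 0)

def trunc (d : X) (k : ℕ) (x : Fin n → X) : Fin n → X :=
  fun j => if (j : ℕ) < k then x j else d

-- basic bounds
lemma rr_nonneg (hn : 1 ≤ n) (p : (Fin n → X) → ℝ) (t : ℕ) (u a : X) :
    0 ≤ rr hn p t u a := le_max_left _ _

lemma rr_le_one (hn : 1 ≤ n) (p : (Fin n → X) → ℝ) (t : ℕ) (u a : X) :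
    rr hn p t u a ≤ 1 := max_le zero_le_one (min_le_left _ _)

lemma rho_nonneg (hn : 1 ≤ n) (p : (Fin n → X) → ℝ) (t : ℕ) (x : Fin n → X) :
    0 ≤ rho hn p t x := by
  unfold rho; split
  · exact rr_nonneg _ _ _ _ _
  · exact le_refl 0

lemma rho_le_one (hn : 1 ≤ n) (p : (Fin n → X) → ℝ) (t : ℕ) (x : Fin n → X) :
    rho hn p t x ≤ 1 := by
  unfold rho; split
  · exact rr_le_one _ _ _ _ _
  · exact zero_le_one

lemma pf_nonneg (hn : 1 ≤ n) (p : (Fin n → X) → ℝ) (t : ℕ) (x : Fin n → X) :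
    0 ≤ pf hn p t x := by
  induction t with
  | zero => exact zero_le_one
  | succ t ih => exact mul_nonneg ih (by linarith [rho_le_one hn p t x])

lemma pf_congr (hn : 1 ≤ n) (p : (Fin n → X) → ℝ) (k : ℕ) (x x' : Fin n → X)
    (h0 : x ⟨0, hn⟩ = x' ⟨0, hn⟩) (h : ∀ j : Fin n, (j : ℕ) < k → x j = x' j) :
    pf hn p k x = pf hn p k x' := by
  induction k with
  | zero => rfl
  | succ t ih =>
    show pf hn p t x * (1 - rho hn p t x) = pf hn p t x' * (1 - rho hn p t x')
    have h1 : pf hn p t x = pf hn p t x' := ih (fun j hj => h j (by omega))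
    have h2 : rho hn p t x = rho hn p t x' := by
      unfold rho; split
      · rename_i ht
        rw [h0, h ⟨t, ht⟩ (by simp)]
      · rfl
    rw [h1, h2]

lemma prPre_congr {p : (Fin n → X) → ℝ} {k : ℕ} {v w : Fin n → X}
    (h : ∀ j : Fin n, (j : ℕ) < k → v j = w j) : prPre p k v = prPre p k w := by
  unfold prPre
  apply Finset.sum_congr rfl
  intro x _
  congr 1
  apply propext
  constructor
  · intro hx j hj; rw [hx j hj, h j hj]
  · intro hx j hj; rw [hx j hj, ← h j hj]

end Mech

-- ====================== functional Markov property ======================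

section FM

variable {n : ℕ}

lemma sum_ite_prPre (p : (Fin n → X) → ℝ) (k : ℕ) (G : (Fin n → X) → ℝ)
    (C : (Fin n → X) → Prop) [DecidablePred C] (V : (Fin n → X) → (Fin n → X)) :
    (∑ w : Fin n → X, if C w then G w * prPre p k (V w) else 0)
      = ∑ x : Fin n → X, ∑ w : Fin n → X,
          if C w ∧ (∀ j : Fin n, (j : ℕ) < k → x j = V w j) then G w * p x else 0 := by
  rw [Finset.sum_comm]
  apply Finset.sum_congr rfl
  intro w _
  by_cases hC : C w
  · rw [if_pos hC]
    unfold prPre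
    rw [Finset.mul_sum]
    apply Finset.sum_congr rfl
    intro x _
    rw [mul_ite, mul_zero]
    exact if_congr (by simp [hC]) rfl rfl
  · rw [if_neg hC]
    symm
    apply Finset.sum_eq_zero
    intro x _
    rw [if_neg]
    tauto

lemma rep_one (p : (Fin n → X) → ℝ) (t : ℕ) (ht : t < n) (d : X)
    (f : (Fin n → X) → ℝ)
    (hf : ∀ x x' : Fin n → X, (∀ j : Fin n, (j : ℕ) ≤ t → x j = x' j) → f x = f x')
    (b : X) :
    (∑ x : Fin n → X, if x ⟨t, ht⟩ = b then p x * f x else 0)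
      = ∑ w : Fin n → X,
          if trunc d (t + 1) w = w ∧ w ⟨t, ht⟩ = b then f w * prPre p (t + 1) w else 0 := by
  rw [sum_ite_prPre p (t+1) f (fun w => trunc d (t + 1) w = w ∧ w ⟨t, ht⟩ = b) (fun w => w)]
  apply Finset.sum_congr rfl
  intro x _
  rw [sum_if_unique' (fun w => (trunc d (t + 1) w = w ∧ w ⟨t, ht⟩ = b)
        ∧ ∀ j : Fin n, (j : ℕ) < t + 1 → x j = w j)
      (x ⟨t, ht⟩ = b) (trunc d (t+1) x) ?_ (fun w => f w * p x)]
  · have hfx : f (trunc d (t+1) x) = f x := by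
      apply hf
      intro j hj
      show (if (j:ℕ) < t+1 then x j else d) = x j
      rw [if_pos (by omega)]
    rw [hfx]
    exact if_congr Iff.rfl (mul_comm _ _) rfl
  · intro w
    constructor
    · rintro ⟨⟨hcan, hwb⟩, hag⟩
      have hweq : w = trunc d (t+1) x := by
        funext j
        show w j = if (j:ℕ) < t+1 then x j else d
        by_cases hj : (j:ℕ) < t+1
        · rw [if_pos hj, hag j hj]
        · rw [if_neg hj]
          have := congrFun hcan j
          simpa [trunc, hj] using this.symm
      refine ⟨hweq, ?_⟩
      rw [hag ⟨t, ht⟩ (by simp)]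
      exact hwb
    · rintro ⟨rfl, hb⟩
      refine ⟨⟨?_, ?_⟩, ?_⟩
      · funext j
        show (if (j:ℕ) < t+1 then (if (j:ℕ) < t+1 then x j else d) else d)
            = (if (j:ℕ) < t+1 then x j else d)
        by_cases hj : (j:ℕ) < t+1 <;> simp [hj]
      · show (if ((⟨t, ht⟩ : Fin n) : ℕ) < t+1 then x ⟨t, ht⟩ else d) = b
        rw [if_pos (by simp)]
        exact hb
      · intro j hj
        show x j = (if (j:ℕ) < t+1 then x j else d)
        rw [if_pos hj]

lemma rep_two (p : (Fin n → X) → ℝ) (t : ℕ) (ht : t + 1 < n) (d : X)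
    (f : (Fin n → X) → ℝ)
    (hf : ∀ x x' : Fin n → X, (∀ j : Fin n, (j : ℕ) ≤ t → x j = x' j) → f x = f x')
    (b a : X) :
    (∑ x : Fin n → X, if x ⟨t, by omega⟩ = b ∧ x ⟨t + 1, ht⟩ = a then p x * f x else 0)
      = ∑ w : Fin n → X,
          if trunc d (t + 1) w = w ∧ w ⟨t, by omega⟩ = b then
            f w * prPre p (t + 2) (Function.update w ⟨t + 1, ht⟩ a) else 0 := by
  rw [sum_ite_prPre p (t+2) f
      (fun w => trunc d (t + 1) w = w ∧ w ⟨t, by omega⟩ = b)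
      (fun w => Function.update w ⟨t + 1, ht⟩ a)]
  apply Finset.sum_congr rfl
  intro x _
  rw [sum_if_unique' (fun w => (trunc d (t + 1) w = w ∧ w ⟨t, by omega⟩ = b)
        ∧ ∀ j : Fin n, (j : ℕ) < t + 2 → x j = Function.update w ⟨t + 1, ht⟩ a j)
      (x ⟨t, by omega⟩ = b ∧ x ⟨t+1, ht⟩ = a) (trunc d (t+1) x) ?_
      (fun w => f w * p x)]
  · have hfx : f (trunc d (t+1) x) = f x := by
      apply hf
      intro j hj
      show (if (j:ℕ) < t+1 then x j else d) = x j
      rw [if_pos (by omega)]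
    rw [hfx]
    exact if_congr Iff.rfl (mul_comm _ _) rfl
  · intro w
    constructor
    · rintro ⟨⟨hcan, hwb⟩, hag⟩
      have hup : ∀ j : Fin n, (j:ℕ) < t + 1 → x j = w j := by
        intro j hj
        have hje : j ≠ (⟨t+1, ht⟩ : Fin n) := by
          intro hje
          rw [hje] at hj
          simp at hj
        have := hag j (by omega)
        rwa [Function.update_of_ne hje] at this
      have hxa : x ⟨t+1, ht⟩ = a := by
        have := hag ⟨t+1, ht⟩ (by simp)
        rwa [Function.update_self] at this
      have hweq : w = trunc d (t+1) x := by
        funext j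
        show w j = if (j:ℕ) < t+1 then x j else d
        by_cases hj : (j:ℕ) < t+1
        · rw [if_pos hj, hup j hj]
        · rw [if_neg hj]
          have := congrFun hcan j
          simpa [trunc, hj] using this.symm
      refine ⟨hweq, ?_, hxa⟩
      rw [hup ⟨t, by omega⟩ (by simp)]
      exact hwb
    · rintro ⟨rfl, hb, ha⟩
      refine ⟨⟨?_, ?_⟩, ?_⟩
      · funext j
        show (if (j:ℕ) < t+1 then (if (j:ℕ) < t+1 then x j else d) else d)
            = (if (j:ℕ) < t+1 then x j else d)
        by_cases hj : (j:ℕ) < t+1 <;> simp [hj]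
      · show (if ((⟨t, by omega⟩ : Fin n) : ℕ) < t+1 then x ⟨t, by omega⟩ else d) = b
        rw [if_pos (by simp)]
        exact hb
      · intro j hj
        by_cases hje : j = (⟨t+1, ht⟩ : Fin n)
        · subst hje
          rw [Function.update_self]
          exact ha
        · rw [Function.update_of_ne hje]
          have hjv : (j:ℕ) < t+1 := by
            have : (j:ℕ) ≠ t+1 := fun h => hje (Fin.ext h)
            omega
          show x j = (if (j:ℕ) < t+1 then x j else d)
          rw [if_pos hjv]

lemma FM (p : (Fin n → X) → ℝ) (hM : IsMarkov p) (t : ℕ) (ht : t + 1 < n) (d : X)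
    (f : (Fin n → X) → ℝ)
    (hf : ∀ x x' : Fin n → X, (∀ j : Fin n, (j : ℕ) ≤ t → x j = x' j) → f x = f x')
    (b a : X) :
    (∑ x : Fin n → X, if x ⟨t, by omega⟩ = b ∧ x ⟨t + 1, ht⟩ = a then p x * f x else 0)
        * prOne p ⟨t, by omega⟩ b
      = (∑ x : Fin n → X, if x ⟨t, by omega⟩ = b then p x * f x else 0)
        * prTwo p ⟨t, by omega⟩ ⟨t + 1, ht⟩ b a := by
  rw [rep_two p t ht d f hf b a, rep_one p t (by omega) d f hf b]
  rw [Finset.sum_mul, Finset.sum_mul]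
  apply Finset.sum_congr rfl
  intro w _
  by_cases hC : trunc d (t + 1) w = w ∧ w ⟨t, by omega⟩ = b
  · rw [if_pos hC, if_pos hC]
    have hMk := hM t ht (Function.update w ⟨t + 1, ht⟩ a)
    have h1 : Function.update w ⟨t + 1, ht⟩ a ⟨t, by omega⟩ = b := by
      rw [Function.update_of_ne (by intro h; have := Fin.mk.injEq .. ▸ h; simp at this)]
      exact hC.2
    have h2 : Function.update w ⟨t + 1, ht⟩ a ⟨t + 1, ht⟩ = a := Function.update_self _ _ _
    rw [h1, h2] at hMk
    have h3 : prPre p (t + 1) (Function.update w ⟨t + 1, ht⟩ a) = prPre p (t + 1) w := by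
      apply prPre_congr
      intro j hj
      apply Function.update_of_ne
      intro hje
      rw [hje] at hj
      simp at hj
    rw [h3] at hMk
    rw [mul_assoc, hMk, mul_assoc]
  · rw [if_neg hC, if_neg hC, zero_mul, zero_mul]

lemma FMdiv (p : (Fin n → X) → ℝ) (hp0 : ∀ x, 0 ≤ p x) (hM : IsMarkov p)
    (t : ℕ) (ht : t + 1 < n) (d : X)
    (f : (Fin n → X) → ℝ)
    (hf : ∀ x x' : Fin n → X, (∀ j : Fin n, (j : ℕ) ≤ t → x j = x' j) → f x = f x')
    (b a : X) :
    (∑ x : Fin n → X, if x ⟨t, by omega⟩ = b ∧ x ⟨t + 1, ht⟩ = a then p x * f x else 0)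
      = (∑ x : Fin n → X, if x ⟨t, by omega⟩ = b then p x * f x else 0) * TrN p t b a := by
  have hTr : TrN p t b a
      = prTwo p ⟨t, by omega⟩ ⟨t + 1, ht⟩ b a / prOne p ⟨t, by omega⟩ b := by
    unfold TrN
    rw [dif_pos ht]
  by_cases hb : prOne p ⟨t, by omega⟩ b = 0
  · have hz : ∀ x : Fin n → X,
        (if x ⟨t, by omega⟩ = b ∧ x ⟨t + 1, ht⟩ = a then p x * f x else 0) = 0 := by
      intro x
      by_cases hc : x ⟨t, by omega⟩ = b ∧ x ⟨t + 1, ht⟩ = a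
      · rw [if_pos hc, p_eq_zero_of_prOne hp0 hc.1 hb, zero_mul]
      · rw [if_neg hc]
    rw [Finset.sum_eq_zero (fun x _ => hz x)]
    have hp2 : prTwo p ⟨t, by omega⟩ ⟨t + 1, ht⟩ b a = 0 := by
      refine le_antisymm ?_ (prTwo_nonneg hp0 _ _ _ _)
      rw [← hb]
      exact prTwo_le_prOne_left hp0 _ _ _ _
    rw [hTr, hp2, hb, zero_div, mul_zero]
  · have := FM p hM t ht d f hf b a
    rw [hTr]
    field_simp
    linarith [this]

end FM

-- ====================== key quantities: inequalities ======================

section Keys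

variable {n : ℕ} (hn : 1 ≤ n) (p : (Fin n → X) → ℝ)

lemma QQ_nonneg (hp0 : ∀ x, 0 ≤ p x) (t : ℕ) (u a : X) : 0 ≤ QQ hn p t u a := by
  unfold QQ; split
  · exact prTwo_nonneg hp0 _ _ _ _
  · exact le_refl 0

lemma QQ_le_P1 (hp0 : ∀ x, 0 ≤ p x) (t : ℕ) (u a : X) : QQ hn p t u a ≤ P1 hn p u := by
  unfold QQ P1; split
  · exact prTwo_le_prOne_left hp0 _ _ _ _
  · exact prOne_nonneg hp0 _ _

lemma P1_nonneg (hp0 : ∀ x, 0 ≤ p x) (u : X) : 0 ≤ P1 hn p u := prOne_nonneg hp0 _ _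

lemma TrN_nonneg (hp0 : ∀ x, 0 ≤ p x) (t : ℕ) (b a : X) : 0 ≤ TrN p t b a := by
  unfold TrN; split
  · exact div_nonneg (prTwo_nonneg hp0 _ _ _ _) (prOne_nonneg hp0 _ _)
  · exact le_refl 0

lemma mm_nonneg' (hp0 : ∀ x, 0 ≤ p x) (hp1 : ∑ x : Fin n → X, p x = 1) (t : ℕ) (a : X) :
    0 ≤ mm hn p t a := by
  unfold mm; split
  · exact minCondMC_nonneg hp0 hp1 _ _ _
  · exact le_refl 0

lemma mm_le (hp0 : ∀ x, 0 ≤ p x) {t : ℕ} (ht : t < n) {u : X} (hu : 0 < P1 hn p u) (a : X) :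
    mm hn p t a ≤ QQ hn p t u a / P1 hn p u := by
  unfold mm QQ P1
  rw [dif_pos ht, dif_pos ht]
  exact minCondMC_le hp0 _ _ hu

lemma le_mm (hp0 : ∀ x, 0 ≤ p x) (hp1 : ∑ x : Fin n → X, p x = 1) {t : ℕ} (ht : t < n)
    {a : X} {r : ℝ} (h : ∀ u : X, 0 < P1 hn p u → r ≤ QQ hn p t u a / P1 hn p u) :
    r ≤ mm hn p t a := by
  unfold mm
  rw [dif_pos ht]
  apply le_minCondMC hp0 hp1
  intro u hu
  have := h u hu
  unfold QQ P1 at this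
  rwa [dif_pos ht] at this

/-- Chapman–Kolmogorov -/
lemma CK (hp0 : ∀ x, 0 ≤ p x) (hM : IsMarkov p) (d : X) {t : ℕ} (ht : t + 1 < n)
    (u a : X) : ∑ b : X, QQ hn p t u b * TrN p t b a = QQ hn p (t + 1) u a := by
  classical
  set fu : (Fin n → X) → ℝ := fun x => if x ⟨0, hn⟩ = u then (1:ℝ) else 0 with hfu
  have hf : ∀ x x' : Fin n → X, (∀ j : Fin n, (j : ℕ) ≤ t → x j = x' j) → fu x = fu x' := by
    intro x x' h
    have h0 : x ⟨0, hn⟩ = x' ⟨0, hn⟩ := h ⟨0, hn⟩ (by simp)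
    simp only [hfu, h0]
  have hmerge : ∀ (i : Fin n) (b : X) (x : Fin n → X),
      (if x i = b then p x * fu x else 0) = (if x ⟨0, hn⟩ = u ∧ x i = b then p x else 0) := by
    intro i b x
    simp only [hfu]
    by_cases h1 : x ⟨0, hn⟩ = u <;> by_cases h2 : x i = b <;> simp [h1, h2]
  have hQ : ∀ b, QQ hn p t u b
      = ∑ x : Fin n → X, if x ⟨t, by omega⟩ = b then p x * fu x else 0 := by
    intro b
    unfold QQ prTwo
    rw [dif_pos (by omega : t < n)]
    exact (Finset.sum_congr rfl (fun x _ => hmerge ⟨t, by omega⟩ b x)).symm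
  calc ∑ b : X, QQ hn p t u b * TrN p t b a
      = ∑ b : X, ∑ x : Fin n → X,
          if x ⟨t, by omega⟩ = b ∧ x ⟨t + 1, ht⟩ = a then p x * fu x else 0 := by
        apply Finset.sum_congr rfl
        intro b _
        rw [hQ b, ← FMdiv p hp0 hM t ht d fu hf b a]
    _ = ∑ x : Fin n → X, ∑ b : X,
          if x ⟨t, by omega⟩ = b ∧ x ⟨t + 1, ht⟩ = a then p x * fu x else 0 :=
        Finset.sum_comm
    _ = ∑ x : Fin n → X, if x ⟨t + 1, ht⟩ = a then p x * fu x else 0 := by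
        apply Finset.sum_congr rfl
        intro x _
        rw [Finset.sum_eq_single (x ⟨t, by omega⟩)]
        · by_cases h2 : x ⟨t + 1, ht⟩ = a <;> simp [h2]
        · intro b _ hb
          rw [if_neg]
          rintro ⟨h1, -⟩
          exact hb h1.symm
        · intro hb; exact absurd (Finset.mem_univ _) hb
    _ = QQ hn p (t + 1) u a := by
        unfold QQ prTwo
        rw [dif_pos ht]
        exact Finset.sum_congr rfl (fun x _ => hmerge ⟨t + 1, ht⟩ a x)

lemma gg_nonneg (hp0 : ∀ x, 0 ≤ p x) (hp1 : ∑ x : Fin n → X, p x = 1) (t : ℕ) (a : X) :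
    0 ≤ gg hn p t a := by
  cases t with
  | zero => exact le_refl 0
  | succ s =>
    apply Finset.sum_nonneg
    intro b _
    exact mul_nonneg (mm_nonneg' hn p hp0 hp1 s b) (TrN_nonneg p hp0 s b a)

lemma gg_le_mm (hp0 : ∀ x, 0 ≤ p x) (hp1 : ∑ x : Fin n → X, p x = 1) (hM : IsMarkov p)
    (d : X) {t : ℕ} (ht : t < n) (a : X) : gg hn p t a ≤ mm hn p t a := by
  cases t with
  | zero => exact mm_nonneg' hn p hp0 hp1 0 a
  | succ s =>
    apply le_mm hn p hp0 hp1 ht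
    intro u hu
    calc gg hn p (s + 1) a = ∑ b : X, mm hn p s b * TrN p s b a := rfl
      _ ≤ ∑ b : X, (QQ hn p s u b / P1 hn p u) * TrN p s b a := by
          apply Finset.sum_le_sum
          intro b _
          exact mul_le_mul_of_nonneg_right (mm_le hn p hp0 (by omega) hu b)
            (TrN_nonneg p hp0 s b a)
      _ = (∑ b : X, QQ hn p s u b * TrN p s b a) / P1 hn p u := by
          rw [Finset.sum_div]
          apply Finset.sum_congr rfl
          intro b _
          rw [div_mul_eq_mul_div]
      _ = QQ hn p (s + 1) u a / P1 hn p u := by rw [CK hn p hp0 hM d ht]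

lemma keystep2 (hp0 : ∀ x, 0 ≤ p x) (hp1 : ∑ x : Fin n → X, p x = 1) (hM : IsMarkov p)
    (d : X) {t : ℕ} (ht : t < n) (u a : X) :
    (QQ hn p t u a - P1 hn p u * gg hn p t a) * rr hn p t u a
      = P1 hn p u * (mm hn p t a - gg hn p t a) := by
  rcases (P1_nonneg hn p hp0 u).eq_or_lt with hP | hP
  · have hQ : QQ hn p t u a = 0 :=
      le_antisymm (le_of_le_of_eq (QQ_le_P1 hn p hp0 t u a) hP.symm) (QQ_nonneg hn p hp0 t u a)
    rw [hQ, ← hP]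
    ring
  · have hgm := gg_le_mm hn p hp0 hp1 hM d ht a
    have hmu : mm hn p t a * P1 hn p u ≤ QQ hn p t u a :=
      (le_div_iff₀ hP).mp (mm_le hn p hp0 ht hP a)
    by_cases hz : QQ hn p t u a - P1 hn p u * gg hn p t a = 0
    · have h1 : P1 hn p u * mm hn p t a ≤ P1 hn p u * gg hn p t a := by nlinarith
      have h2 : P1 hn p u * gg hn p t a ≤ P1 hn p u * mm hn p t a :=
        mul_le_mul_of_nonneg_left hgm hP.le
      have h3 : mm hn p t a = gg hn p t a :=
        mul_left_cancel₀ hP.ne' (le_antisymm h1 h2)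
      rw [hz, zero_mul, h3]
      ring
    · have hge : 0 ≤ QQ hn p t u a - P1 hn p u * gg hn p t a := by nlinarith
      have hpos : 0 < QQ hn p t u a - P1 hn p u * gg hn p t a := lt_of_le_of_ne hge (Ne.symm hz)
      have hden : QQ hn p t u a / P1 hn p u - gg hn p t a
          = (QQ hn p t u a - P1 hn p u * gg hn p t a) / P1 hn p u := by
        field_simp
      have hdpos : 0 < QQ hn p t u a / P1 hn p u - gg hn p t a := by
        rw [hden]; positivity
      have hq1 : (mm hn p t a - gg hn p t a) / (QQ hn p t u a / P1 hn p u - gg hn p t a) ≤ 1 := by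
        rw [div_le_one hdpos]
        have : mm hn p t a ≤ QQ hn p t u a / P1 hn p u := mm_le hn p hp0 ht hP a
        linarith
      have hq0 : 0 ≤ (mm hn p t a - gg hn p t a) / (QQ hn p t u a / P1 hn p u - gg hn p t a) :=
        div_nonneg (by linarith) hdpos.le
      have hrr : rr hn p t u a
          = (mm hn p t a - gg hn p t a) / (QQ hn p t u a / P1 hn p u - gg hn p t a) := by
        unfold rr
        rw [min_eq_right hq1, max_eq_right hq0]
      rw [hrr, hden, div_div_eq_mul_div]
      rw [mul_div_assoc']
      rw [mul_comm (QQ hn p t u a - P1 hn p u * gg hn p t a)]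
      rw [mul_assoc, mul_div_assoc, mul_div_assoc]
      rw [div_self hz, mul_one, mul_comm]
  
lemma keystep1 (hp0 : ∀ x, 0 ≤ p x) (hp1 : ∑ x : Fin n → X, p x = 1) (hM : IsMarkov p)
    (d : X) {t : ℕ} (ht : t < n) (u a : X) :
    (QQ hn p t u a - P1 hn p u * gg hn p t a) * (1 - rr hn p t u a)
      = QQ hn p t u a - P1 hn p u * mm hn p t a := by
  have h := keystep2 hn p hp0 hp1 hM d ht u a
  nlinarith [h]

end Keys

-- ====================== the main induction ======================

section KeyM

variable {n : ℕ} (hn : 1 ≤ n) (p : (Fin n → X) → ℝ)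

lemma keyM (hp0 : ∀ x, 0 ≤ p x) (hp1 : ∑ x : Fin n → X, p x = 1) (hM : IsMarkov p) (d : X) :
    ∀ (t : ℕ) (ht : t < n) (u a : X),
      (∑ x : Fin n → X, if x ⟨0, hn⟩ = u ∧ x ⟨t, ht⟩ = a then p x * pf hn p t x else 0)
        = QQ hn p t u a - P1 hn p u * gg hn p t a := by
  intro t
  induction t with
  | zero =>
    intro ht u a
    have h1 : ∀ x : Fin n → X, (if x ⟨0, hn⟩ = u ∧ x ⟨0, ht⟩ = a then p x * pf hn p 0 x else 0)
        = (if x ⟨0, hn⟩ = u ∧ x ⟨0, hn⟩ = a then p x else 0) := by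
      intro x
      have : pf hn p 0 x = 1 := rfl
      rw [this, mul_one]
    rw [Finset.sum_congr rfl (fun x _ => h1 x)]
    show prTwo p ⟨0, hn⟩ ⟨0, hn⟩ u a = _
    have hgg : gg hn p 0 a = 0 := rfl
    rw [hgg, mul_zero, sub_zero]
    unfold QQ
    rw [dif_pos ht]
  | succ t ih =>
    intro ht u a
    have htn : t < n := by omega
    set f : (Fin n → X) → ℝ := fun x => if x ⟨0, hn⟩ = u then pf hn p (t + 1) x else 0 with hfdef
    have hf : ∀ x x' : Fin n → X, (∀ j : Fin n, (j : ℕ) ≤ t → x j = x' j) → f x = f x' := by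
      intro x x' h
      have h0 : x ⟨0, hn⟩ = x' ⟨0, hn⟩ := h ⟨0, hn⟩ (by simp)
      simp only [hfdef]
      rw [h0]
      by_cases hc : x' ⟨0, hn⟩ = u
      · rw [if_pos hc, if_pos hc,
          pf_congr hn p (t + 1) x x' h0 (fun j hj => h j (by omega))]
      · rw [if_neg hc, if_neg hc]
    -- the sum with weight pf (t+1) and constraint at coordinate t equals QQ - P1 * mm
    have hkeyL : ∀ b : X,
        (∑ x : Fin n → X, if x ⟨t, by omega⟩ = b then p x * f x else 0)
          = QQ hn p t u b - P1 hn p u * mm hn p t b := by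
      intro b
      have hsummand : ∀ x : Fin n → X,
          (if x ⟨t, by omega⟩ = b then p x * f x else 0)
            = (if x ⟨0, hn⟩ = u ∧ x ⟨t, htn⟩ = b then p x * pf hn p t x else 0)
                * (1 - rr hn p t u b) := by
        intro x
        simp only [hfdef]
        by_cases h1 : x ⟨0, hn⟩ = u <;> by_cases h2 : x ⟨t, htn⟩ = b
        · rw [if_pos h2, if_pos h1, if_pos ⟨h1, h2⟩]
          have hpf : pf hn p (t + 1) x = pf hn p t x * (1 - rho hn p t x) := rfl
          have hrho : rho hn p t x = rr hn p t u b := by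
            unfold rho
            rw [dif_pos htn, h1, h2]
          rw [hpf, hrho]
          ring
        · rw [if_neg h2, if_neg (by tauto), zero_mul]
        · rw [if_pos h2, if_neg h1, if_neg (by tauto), mul_zero, zero_mul]
        · rw [if_neg h2, if_neg (by tauto), zero_mul]
      rw [Finset.sum_congr rfl (fun x _ => hsummand x), ← Finset.sum_mul,
        ih htn u b, keystep1 hn p hp0 hp1 hM d htn u b]
    -- decompose the goal sum over the value of coordinate t
    have hdecomp :
        (∑ x : Fin n → X, if x ⟨0, hn⟩ = u ∧ x ⟨t + 1, ht⟩ = a then p x * pf hn p (t + 1) x else 0)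
          = ∑ b : X, ∑ x : Fin n → X,
              if x ⟨t, by omega⟩ = b ∧ x ⟨t + 1, ht⟩ = a then p x * f x else 0 := by
      rw [Finset.sum_comm]
      apply Finset.sum_congr rfl
      intro x _
      rw [Finset.sum_eq_single (x ⟨t, by omega⟩)]
      · by_cases h2 : x ⟨t + 1, ht⟩ = a
        · simp only [hfdef]
          by_cases h1 : x ⟨0, hn⟩ = u
          · rw [if_pos ⟨h1, h2⟩, if_pos ⟨by trivial, h2⟩, if_pos h1]
          · rw [if_neg (by tauto), if_pos ⟨by trivial, h2⟩, if_neg h1, mul_zero]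
        · rw [if_neg (by tauto), if_neg (by tauto)]
      · intro b _ hb
        rw [if_neg]
        rintro ⟨h1, -⟩
        exact hb h1.symm
      · intro hb; exact absurd (Finset.mem_univ _) hb
    rw [hdecomp]
    have hstep : ∀ b : X,
        (∑ x : Fin n → X, if x ⟨t, by omega⟩ = b ∧ x ⟨t + 1, ht⟩ = a then p x * f x else 0)
          = (QQ hn p t u b - P1 hn p u * mm hn p t b) * TrN p t b a := by
      intro b
      rw [FMdiv p hp0 hM t ht d f hf b a, hkeyL b]
    rw [Finset.sum_congr rfl (fun b _ => hstep b)]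
    have hgg : gg hn p (t + 1) a = ∑ b : X, mm hn p t b * TrN p t b a := rfl
    calc ∑ b : X, (QQ hn p t u b - P1 hn p u * mm hn p t b) * TrN p t b a
        = (∑ b : X, QQ hn p t u b * TrN p t b a)
            - P1 hn p u * ∑ b : X, mm hn p t b * TrN p t b a := by
          rw [Finset.mul_sum, ← Finset.sum_sub_distrib]
          apply Finset.sum_congr rfl
          intro b _
          ring
      _ = QQ hn p (t + 1) u a - P1 hn p u * gg hn p (t + 1) a := by
          rw [CK hn p hp0 hM d ht, hgg]

end KeyM

-- ====================== stripping trailing constraints ======================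

section Strip

variable {n : ℕ} (hn : 1 ≤ n) (p : (Fin n → X) → ℝ)

lemma strip (hp0 : ∀ x, 0 ≤ p x) (hM : IsMarkov p) (d : X) {t : ℕ} (ht : t < n)
    (u : X) (a' : ℕ → X) :
    ∀ s : ℕ, t + 1 + s ≤ n →
      (∑ x : Fin n → X,
        if x ⟨0, hn⟩ = u ∧ (∀ j : Fin n, t ≤ (j : ℕ) → (j : ℕ) < t + 1 + s → x j = a' (j : ℕ))
        then p x * pf hn p t x else 0)
      = (∑ x : Fin n → X, if x ⟨0, hn⟩ = u ∧ x ⟨t, ht⟩ = a' t then p x * pf hn p t x else 0)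
        * ∏ k ∈ Finset.range s, TrN p (t + k) (a' (t + k)) (a' (t + k + 1)) := by
  intro s
  induction s with
  | zero =>
    intro _
    rw [Finset.prod_range_zero, mul_one]
    apply Finset.sum_congr rfl
    intro x _
    apply if_congr _ rfl rfl
    constructor
    · rintro ⟨h0, h1⟩
      exact ⟨h0, h1 ⟨t, ht⟩ (by simp only [Fin.val_mk]; omega) (by simp only [Fin.val_mk]; omega)⟩
    · rintro ⟨h0, h1⟩
      refine ⟨h0, ?_⟩
      intro j hj1 hj2
      have : j = ⟨t, ht⟩ := Fin.ext (by simp only [Fin.val_mk] at hj2 ⊢; omega)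
      rw [this, h1]
    
  | succ s ih =>
    intro hs
    have hts : t + s + 1 < n := by omega
    set f : (Fin n → X) → ℝ := fun x =>
      if x ⟨0, hn⟩ = u ∧ (∀ j : Fin n, t ≤ (j : ℕ) → (j : ℕ) < t + s → x j = a' (j : ℕ))
      then pf hn p t x else 0 with hfdef
    have hf : ∀ x x' : Fin n → X, (∀ j : Fin n, (j : ℕ) ≤ t + s → x j = x' j) → f x = f x' := by
      intro x x' h
      have h0 : x ⟨0, hn⟩ = x' ⟨0, hn⟩ := h ⟨0, hn⟩ (by simp)
      simp only [hfdef]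
      have hcond : (x ⟨0, hn⟩ = u ∧ (∀ j : Fin n, t ≤ (j : ℕ) → (j : ℕ) < t + s → x j = a' (j : ℕ)))
          ↔ (x' ⟨0, hn⟩ = u ∧ (∀ j : Fin n, t ≤ (j : ℕ) → (j : ℕ) < t + s → x' j = a' (j : ℕ))) := by
        rw [h0]
        constructor
        · rintro ⟨h1, h2⟩
          exact ⟨h1, fun j hj1 hj2 => by rw [← h j (by omega), h2 j hj1 hj2]⟩
        · rintro ⟨h1, h2⟩
          exact ⟨h1, fun j hj1 hj2 => by rw [h j (by omega), h2 j hj1 hj2]⟩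
      by_cases hc : x' ⟨0, hn⟩ = u ∧ (∀ j : Fin n, t ≤ (j : ℕ) → (j : ℕ) < t + s → x' j = a' (j : ℕ))
      · rw [if_pos (hcond.mpr hc), if_pos hc,
          pf_congr hn p t x x' h0 (fun j hj => h j (by omega))]
      · rw [if_neg (fun hh => hc (hcond.mp hh)), if_neg hc]
    have step1 : (∑ x : Fin n → X,
        if x ⟨0, hn⟩ = u ∧ (∀ j : Fin n, t ≤ (j : ℕ) → (j : ℕ) < t + 1 + (s+1) → x j = a' (j : ℕ))
        then p x * pf hn p t x else 0)
        = ∑ x : Fin n → X,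
            if x ⟨t + s, by omega⟩ = a' (t + s) ∧ x ⟨t + s + 1, hts⟩ = a' (t + s + 1)
            then p x * f x else 0 := by
      apply Finset.sum_congr rfl
      intro x _
      simp only [hfdef]
      by_cases hc : x ⟨0, hn⟩ = u ∧ (∀ j : Fin n, t ≤ (j : ℕ) → (j : ℕ) < t + s → x j = a' (j : ℕ))
      · by_cases hb : x ⟨t + s, by omega⟩ = a' (t + s) ∧ x ⟨t + s + 1, hts⟩ = a' (t + s + 1)
        · have hbig : x ⟨0, hn⟩ = u
              ∧ (∀ j : Fin n, t ≤ (j : ℕ) → (j : ℕ) < t + 1 + (s + 1) → x j = a' (j : ℕ)) := by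
            refine ⟨hc.1, ?_⟩
            intro j hj1 hj2
            rcases Nat.lt_or_ge (j : ℕ) (t + s) with hj | hj
            · exact hc.2 j hj1 hj
            · rcases Nat.eq_or_lt_of_le hj with hj' | hj'
              · have hje : j = (⟨t + s, by omega⟩ : Fin n) := Fin.ext (by simp only [Fin.val_mk]; omega)
                rw [hje]
                exact hb.1
              · have hje : j = (⟨t + s + 1, hts⟩ : Fin n) := Fin.ext (by simp only [Fin.val_mk]; omega)
                rw [hje]
                exact hb.2
          rw [if_pos hb, if_pos hc, if_pos hbig]
        · rw [if_neg hb, if_neg ?_]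
          rintro ⟨h0, h1⟩
          apply hb
          constructor
          · exact h1 ⟨t + s, by omega⟩ (by simp only [Fin.val_mk]; omega)
              (by simp only [Fin.val_mk]; omega)
          · exact h1 ⟨t + s + 1, hts⟩ (by simp only [Fin.val_mk]; omega)
              (by simp only [Fin.val_mk]; omega)
      · rw [if_neg ?_]
        · by_cases hb : x ⟨t + s, by omega⟩ = a' (t + s) ∧ x ⟨t + s + 1, hts⟩ = a' (t + s + 1)
          · rw [if_pos hb, if_neg hc, mul_zero]
          · rw [if_neg hb]
        · rintro ⟨h0, h1⟩
          exact hc ⟨h0, fun j hj1 hj2 => h1 j hj1 (by omega)⟩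
    have step2 : (∑ x : Fin n → X,
        if x ⟨0, hn⟩ = u ∧ (∀ j : Fin n, t ≤ (j : ℕ) → (j : ℕ) < t + 1 + s → x j = a' (j : ℕ))
        then p x * pf hn p t x else 0)
        = ∑ x : Fin n → X, if x ⟨t + s, by omega⟩ = a' (t + s) then p x * f x else 0 := by
      apply Finset.sum_congr rfl
      intro x _
      simp only [hfdef]
      by_cases hc : x ⟨0, hn⟩ = u ∧ (∀ j : Fin n, t ≤ (j : ℕ) → (j : ℕ) < t + s → x j = a' (j : ℕ))
      · by_cases hb : x ⟨t + s, by omega⟩ = a' (t + s)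
        · have hbig : x ⟨0, hn⟩ = u
              ∧ (∀ j : Fin n, t ≤ (j : ℕ) → (j : ℕ) < t + 1 + s → x j = a' (j : ℕ)) := by
            refine ⟨hc.1, ?_⟩
            intro j hj1 hj2
            rcases Nat.lt_or_ge (j : ℕ) (t + s) with hj | hj
            · exact hc.2 j hj1 hj
            · have hje : j = (⟨t + s, by omega⟩ : Fin n) := Fin.ext (by simp only [Fin.val_mk]; omega)
              rw [hje]
              exact hb
          rw [if_pos hb, if_pos hc, if_pos hbig]
        · rw [if_neg hb, if_neg ?_]
          rintro ⟨h0, h1⟩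
          exact hb (h1 ⟨t + s, by omega⟩ (by simp only [Fin.val_mk]; omega)
            (by simp only [Fin.val_mk]; omega))
      · rw [if_neg ?_]
        · by_cases hb : x ⟨t + s, by omega⟩ = a' (t + s)
          · rw [if_pos hb, if_neg hc, mul_zero]
          · rw [if_neg hb]
        · rintro ⟨h0, h1⟩
          exact hc ⟨h0, fun j hj1 hj2 => h1 j hj1 (by omega)⟩
    rw [step1, FMdiv p hp0 hM (t + s) hts d f hf (a' (t + s)) (a' (t + s + 1)),
      ← step2, ih (by omega), Finset.prod_range_succ]
    ring

end Strip

-- ====================== privacy computation ======================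

section Priv

variable {n : ℕ} (hn : 1 ≤ n) (p : (Fin n → X) → ℝ)

def avN (d : X) (y : Fin n → Option X) (k : ℕ) : X :=
  if h : k < n then (y ⟨k, h⟩).getD d else d

def Shape (t : ℕ) (y : Fin n → Option X) : Prop :=
  (∀ j : Fin n, (j : ℕ) < t → y j = none) ∧ (∀ j : Fin n, t ≤ (j : ℕ) → y j ≠ none)

lemma avN_eval (d : X) (y : Fin n → Option X) (j : Fin n) :
    avN d y (j : ℕ) = (y j).getD d := by
  unfold avN
  rw [dif_pos j.isLt]

lemma revFrom_shape {t : ℕ} {x : Fin n → X} {y : Fin n → Option X}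
    (h : y = revFrom t x) : Shape t y := by
  subst h
  constructor
  · intro j hj
    exact if_neg (by omega)
  · intro j hj
    show (if t ≤ (j : ℕ) then some (x j) else none) ≠ none
    rw [if_pos hj]
    simp

lemma revFrom_iff (d : X) {t : ℕ} (y : Fin n → Option X) (x : Fin n → X) :
    y = revFrom t x ↔ Shape t y ∧ ∀ j : Fin n, t ≤ (j : ℕ) → x j = avN d y (j : ℕ) := by
  constructor
  · intro h
    refine ⟨revFrom_shape h, ?_⟩
    subst h
    intro j hj
    rw [avN_eval]
    show x j = (if t ≤ (j : ℕ) then some (x j) else none).getD d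
    rw [if_pos hj]
    rfl
  · rintro ⟨⟨hnone, hsome⟩, hval⟩
    funext j
    show y j = if t ≤ (j : ℕ) then some (x j) else none
    by_cases hj : t ≤ (j : ℕ)
    · rw [if_pos hj]
      obtain ⟨b, hb⟩ := Option.ne_none_iff_exists'.mp (hsome j hj)
      rw [hb, hval j hj, avN_eval, hb]
      rfl
    · rw [if_neg hj]
      exact hnone j (by omega)

lemma sum_QQ (hp0 : ∀ x, 0 ≤ p x) {t : ℕ} (ht : t < n) (u : X) :
    ∑ a : X, QQ hn p t u a = P1 hn p u := by
  unfold QQ P1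
  calc ∑ a : X, (if h : t < n then prTwo p ⟨0, hn⟩ ⟨t, h⟩ u a else 0)
      = ∑ a : X, prTwo p ⟨0, hn⟩ ⟨t, ht⟩ u a :=
        Finset.sum_congr rfl (fun a _ => by rw [dif_pos ht])
    _ = prOne p ⟨0, hn⟩ u := sum_prTwo_right _ _ _

lemma keyL (hp0 : ∀ x, 0 ≤ p x) (hp1 : ∑ x : Fin n → X, p x = 1) (hM : IsMarkov p)
    (d : X) {t : ℕ} (ht : t < n) (u b : X) :
    (∑ x : Fin n → X, if x ⟨0, hn⟩ = u ∧ x ⟨t, ht⟩ = b then p x * pf hn p (t + 1) x else 0)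
      = QQ hn p t u b - P1 hn p u * mm hn p t b := by
  have hsummand : ∀ x : Fin n → X,
      (if x ⟨0, hn⟩ = u ∧ x ⟨t, ht⟩ = b then p x * pf hn p (t + 1) x else 0)
        = (if x ⟨0, hn⟩ = u ∧ x ⟨t, ht⟩ = b then p x * pf hn p t x else 0)
            * (1 - rr hn p t u b) := by
    intro x
    by_cases hc : x ⟨0, hn⟩ = u ∧ x ⟨t, ht⟩ = b
    · rw [if_pos hc, if_pos hc]
      have hpf : pf hn p (t + 1) x = pf hn p t x * (1 - rho hn p t x) := rfl
      have hrho : rho hn p t x = rr hn p t u b := by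
        unfold rho
        rw [dif_pos ht, hc.1, hc.2]
      rw [hpf, hrho]
      ring
    · rw [if_neg hc, if_neg hc, zero_mul]
  rw [Finset.sum_congr rfl (fun x _ => hsummand x), ← Finset.sum_mul,
    keyM hn p hp0 hp1 hM d t ht u b, keystep1 hn p hp0 hp1 hM d ht u b]

lemma keyL_total (hp0 : ∀ x, 0 ≤ p x) (hp1 : ∑ x : Fin n → X, p x = 1) (hM : IsMarkov p)
    (d : X) {t : ℕ} (ht : t < n) (u : X) :
    (∑ x : Fin n → X, if x ⟨0, hn⟩ = u then p x * pf hn p (t + 1) x else 0)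
      = P1 hn p u * (1 - ∑ a : X, mm hn p t a) := by
  have hdecomp : (∑ x : Fin n → X, if x ⟨0, hn⟩ = u then p x * pf hn p (t + 1) x else 0)
      = ∑ a : X, ∑ x : Fin n → X,
          if x ⟨0, hn⟩ = u ∧ x ⟨t, ht⟩ = a then p x * pf hn p (t + 1) x else 0 := by
    rw [Finset.sum_comm]
    apply Finset.sum_congr rfl
    intro x _
    rw [Finset.sum_eq_single (x ⟨t, ht⟩)]
    · by_cases h1 : x ⟨0, hn⟩ = u
      · rw [if_pos h1, if_pos ⟨h1, rfl⟩]
      · rw [if_neg h1, if_neg (by tauto)]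
    · intro b _ hb
      rw [if_neg]
      rintro ⟨-, h2⟩
      exact hb h2.symm
    · intro hb; exact absurd (Finset.mem_univ _) hb
  rw [hdecomp,
    Finset.sum_congr rfl (fun a _ => keyL hn p hp0 hp1 hM d ht u a),
    Finset.sum_sub_distrib, sum_QQ hn p hp0 ht u, ← Finset.mul_sum]
  ring

lemma stripAll (hp0 : ∀ x, 0 ≤ p x) (hp1 : ∑ x : Fin n → X, p x = 1) (hM : IsMarkov p)
    (d : X) {t : ℕ} (ht : t < n) (u : X) (a' : ℕ → X) :
    (∑ x : Fin n → X,
      if x ⟨0, hn⟩ = u ∧ (∀ j : Fin n, t ≤ (j : ℕ) → x j = a' (j : ℕ))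
      then p x * pf hn p t x else 0)
    = (QQ hn p t u (a' t) - P1 hn p u * gg hn p t (a' t))
        * ∏ k ∈ Finset.range (n - 1 - t), TrN p (t + k) (a' (t + k)) (a' (t + k + 1)) := by
  have hcond : ∀ x : Fin n → X,
      (x ⟨0, hn⟩ = u ∧ (∀ j : Fin n, t ≤ (j : ℕ) → x j = a' (j : ℕ)))
        ↔ (x ⟨0, hn⟩ = u
            ∧ (∀ j : Fin n, t ≤ (j : ℕ) → (j : ℕ) < t + 1 + (n - 1 - t) → x j = a' (j : ℕ))) := by
    intro x
    constructor
    · rintro ⟨h0, h1⟩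
      exact ⟨h0, fun j hj1 _ => h1 j hj1⟩
    · rintro ⟨h0, h1⟩
      exact ⟨h0, fun j hj1 => h1 j hj1 (by have := j.isLt; omega)⟩
  rw [Finset.sum_congr rfl (fun x _ => if_congr (hcond x) rfl rfl),
    strip hn p hp0 hM d ht u a' (n - 1 - t) (by omega),
    keyM hn p hp0 hp1 hM d t ht u (a' t)]

lemma priv_term (hp0 : ∀ x, 0 ≤ p x) (hp1 : ∑ x : Fin n → X, p x = 1) (hM : IsMarkov p)
    (d : X) {t : ℕ} (ht : t < n) (u : X) (y : Fin n → Option X) :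
    (∑ x : Fin n → X,
      if x ⟨0, hn⟩ = u ∧ y = revFrom t x then p x * (pf hn p t x * rho hn p t x) else 0)
    = P1 hn p u * (if Shape t y then
        (mm hn p t (avN d y t) - gg hn p t (avN d y t))
          * ∏ k ∈ Finset.range (n - 1 - t), TrN p (t + k) (avN d y (t + k)) (avN d y (t + k + 1))
        else 0) := by
  by_cases hS : Shape t y
  · have hsummand : ∀ x : Fin n → X,
        (if x ⟨0, hn⟩ = u ∧ y = revFrom t x then p x * (pf hn p t x * rho hn p t x) else 0)
          = (if x ⟨0, hn⟩ = u ∧ (∀ j : Fin n, t ≤ (j : ℕ) → x j = avN d y (j : ℕ))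
              then p x * pf hn p t x else 0) * rr hn p t u (avN d y t) := by
      intro x
      by_cases hc : x ⟨0, hn⟩ = u ∧ (∀ j : Fin n, t ≤ (j : ℕ) → x j = avN d y (j : ℕ))
      · have hcc : x ⟨0, hn⟩ = u ∧ y = revFrom t x :=
          ⟨hc.1, (revFrom_iff d y x).mpr ⟨hS, hc.2⟩⟩
        rw [if_pos hcc, if_pos hc]
        have hxt : x ⟨t, ht⟩ = avN d y t := hc.2 ⟨t, ht⟩ (by simp only [Fin.val_mk]; omega)
        have hrho : rho hn p t x = rr hn p t u (avN d y t) := by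
          unfold rho
          rw [dif_pos ht, hc.1, hxt]
        rw [hrho]
        ring
      · rw [if_neg ?_, if_neg hc, zero_mul]
        rintro ⟨h0, h1⟩
        exact hc ⟨h0, ((revFrom_iff d y x).mp h1).2⟩
    rw [Finset.sum_congr rfl (fun x _ => hsummand x), ← Finset.sum_mul,
      stripAll hn p hp0 hp1 hM d ht u (fun k => avN d y k), if_pos hS,
      mul_right_comm, keystep2 hn p hp0 hp1 hM d ht u (avN d y t)]
    ring
  · rw [if_neg hS, mul_zero]
    apply Finset.sum_eq_zero
    intro x _
    rw [if_neg]
    rintro ⟨-, h1⟩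
    exact hS (revFrom_shape h1)

lemma priv_none (hp0 : ∀ x, 0 ≤ p x) (hp1 : ∑ x : Fin n → X, p x = 1) (hM : IsMarkov p)
    (d : X) (u : X) :
    (∑ x : Fin n → X, if x ⟨0, hn⟩ = u then p x * pf hn p n x else 0)
      = P1 hn p u * (1 - ∑ a : X, mm hn p (n - 1) a) := by
  have h := keyL_total hn p hp0 hp1 hM d (t := n - 1) (by omega) u
  rwa [Nat.sub_add_cancel hn] at h

end Priv

-- ====================== assembled mechanism properties ======================

section Assemble

variable {n : ℕ} (hn : 1 ≤ n) (p : (Fin n → X) → ℝ)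

def Cy (d : X) (y : Fin n → Option X) : ℝ :=
  (∑ t ∈ Finset.range n, if Shape t y then
      (mm hn p t (avN d y t) - gg hn p t (avN d y t))
        * ∏ k ∈ Finset.range (n - 1 - t), TrN p (t + k) (avN d y (t + k)) (avN d y (t + k + 1))
    else 0)
  + (if y = (fun _ => none) then (1 - ∑ a : X, mm hn p (n - 1) a) else 0)

lemma priv_main (hp0 : ∀ x, 0 ≤ p x) (hp1 : ∑ x : Fin n → X, p x = 1) (hM : IsMarkov p)
    (d : X) (u : X) (y : Fin n → Option X) :
    (∑ x : Fin n → X, if x ⟨0, hn⟩ = u then p x * Wm hn p x y else 0)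
      = P1 hn p u * Cy hn p d y := by
  have expand : ∀ x : Fin n → X,
      (if x ⟨0, hn⟩ = u then p x * Wm hn p x y else 0)
        = (∑ t ∈ Finset.range n,
            if x ⟨0, hn⟩ = u ∧ y = revFrom t x then p x * (pf hn p t x * rho hn p t x) else 0)
          + (if x ⟨0, hn⟩ = u ∧ y = (fun _ => none) then p x * pf hn p n x else 0) := by
    intro x
    by_cases h0 : x ⟨0, hn⟩ = u
    · rw [if_pos h0]
      unfold Wm
      rw [mul_add, Finset.mul_sum]
      congr 1
      · apply Finset.sum_congr rfl
        intro t _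
        rw [mul_ite, mul_zero]
        exact if_congr (by simp [h0]) (by ring) rfl
      · rw [mul_ite, mul_zero]
        exact if_congr (by simp [h0]) rfl rfl
    · rw [if_neg h0]
      symm
      rw [Finset.sum_eq_zero (fun t _ => if_neg (by tauto)), if_neg (by tauto), add_zero]
  rw [Finset.sum_congr rfl (fun x _ => expand x), Finset.sum_add_distrib]
  have hpart1 : (∑ x : Fin n → X, ∑ t ∈ Finset.range n,
      if x ⟨0, hn⟩ = u ∧ y = revFrom t x then p x * (pf hn p t x * rho hn p t x) else 0)
      = P1 hn p u * (∑ t ∈ Finset.range n, if Shape t y then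
          (mm hn p t (avN d y t) - gg hn p t (avN d y t))
            * ∏ k ∈ Finset.range (n - 1 - t),
                TrN p (t + k) (avN d y (t + k)) (avN d y (t + k + 1))
        else 0) := by
    rw [Finset.sum_comm, Finset.mul_sum]
    apply Finset.sum_congr rfl
    intro t htmem
    exact priv_term hn p hp0 hp1 hM d (Finset.mem_range.mp htmem) u y
  have hpart2 : (∑ x : Fin n → X,
      if x ⟨0, hn⟩ = u ∧ y = (fun _ => none) then p x * pf hn p n x else 0)
      = P1 hn p u * (if y = (fun _ => none) then (1 - ∑ a : X, mm hn p (n - 1) a) else 0) := by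
    by_cases hy : y = (fun _ => none)
    · rw [if_pos hy]
      have hc : ∀ x : Fin n → X,
          (if x ⟨0, hn⟩ = u ∧ y = (fun _ => none) then p x * pf hn p n x else 0)
            = (if x ⟨0, hn⟩ = u then p x * pf hn p n x else 0) :=
        fun x => if_congr (by simp [hy]) rfl rfl
      rw [Finset.sum_congr rfl (fun x _ => hc x)]
      exact priv_none hn p hp0 hp1 hM d u
    · rw [if_neg hy, mul_zero]
      exact Finset.sum_eq_zero (fun x _ => if_neg (by tauto))
  rw [hpart1, hpart2, Cy, mul_add]

lemma marginal_main (hp0 : ∀ x, 0 ≤ p x) (hp1 : ∑ x : Fin n → X, p x = 1) (hM : IsMarkov p)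
    (d : X) (y : Fin n → Option X) :
    (∑ x : Fin n → X, p x * Wm hn p x y) = Cy hn p d y := by
  rw [fiber_sum ⟨0, hn⟩ (fun x => p x * Wm hn p x y),
    Finset.sum_congr rfl (fun u _ => priv_main hn p hp0 hp1 hM d u y),
    ← Finset.sum_mul]
  rw [show (∑ u : X, P1 hn p u) = 1 from sum_prOne hp1 ⟨0, hn⟩, one_mul]

lemma Wm_nonneg (hp0 : ∀ x, 0 ≤ p x) (x : Fin n → X) (y : Fin n → Option X) :
    0 ≤ Wm hn p x y := by
  unfold Wm
  apply add_nonneg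
  · apply Finset.sum_nonneg
    intro t _
    split
    · exact mul_nonneg (pf_nonneg hn p t x) (rho_nonneg hn p t x)
    · exact le_refl 0
  · split
    · exact pf_nonneg hn p n x
    · exact le_refl 0

lemma pf_step (x : Fin n → X) (t : ℕ) :
    pf hn p t x * rho hn p t x = pf hn p t x - pf hn p (t + 1) x := by
  have : pf hn p (t + 1) x = pf hn p t x * (1 - rho hn p t x) := rfl
  rw [this]
  ring

lemma Wm_sum_one (x : Fin n → X) : ∑ y : Fin n → Option X, Wm hn p x y = 1 := by
  unfold Wm
  rw [Finset.sum_add_distrib, Finset.sum_comm]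
  have h1 : ∀ t ∈ Finset.range n, (∑ y : Fin n → Option X,
      if y = revFrom t x then pf hn p t x * rho hn p t x else 0)
      = pf hn p t x - pf hn p (t + 1) x := by
    intro t _
    rw [Finset.sum_ite_eq' Finset.univ (revFrom t x) (fun _ => pf hn p t x * rho hn p t x)]
    simp [pf_step hn p x t]
  rw [Finset.sum_congr rfl h1,
    Finset.sum_ite_eq' Finset.univ (fun _ => (none : Option X)) (fun _ => pf hn p n x),
    Finset.sum_range_sub' (fun t => pf hn p t x) n]
  simp only [Finset.mem_univ, if_true]
  have h0 : pf hn p 0 x = 1 := rfl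
  rw [h0]
  ring

lemma Wm_faithful (x : Fin n → X) (y : Fin n → Option X) (hpos : 0 < Wm hn p x y) :
    ∀ i : Fin n, y i = some (x i) ∨ y i = none := by
  by_contra hcon
  push_neg at hcon
  obtain ⟨i, h1, h2⟩ := hcon
  have hz : Wm hn p x y = 0 := by
    unfold Wm
    rw [Finset.sum_eq_zero, if_neg, add_zero]
    · intro hy
      exact h2 (congrFun hy i)
    · intro t _
      rw [if_neg]
      intro hy
      rw [hy] at h1 h2
      by_cases ht : t ≤ (i : ℕ)
      · exact h1 (by show (if t ≤ (i:ℕ) then some (x i) else none) = some (x i); rw [if_pos ht])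
      · exact h2 (by show (if t ≤ (i:ℕ) then some (x i) else none) = none; rw [if_neg ht])
  rw [hz] at hpos
  exact lt_irrefl 0 hpos

lemma card_filter_lt {t : ℕ} (htn : t ≤ n) :
    ((Finset.univ : Finset (Fin n)).filter (fun i : Fin n => (i : ℕ) < t)).card = t := by
  rcases Nat.eq_or_lt_of_le htn with h | h
  · subst h
    rw [Finset.filter_true_of_mem (fun i _ => i.isLt), Finset.card_univ, Fintype.card_fin]
  · have heq : (Finset.univ : Finset (Fin n)).filter (fun i : Fin n => (i : ℕ) < t)
        = Finset.Iio (⟨t, h⟩ : Fin n) := by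
      ext i
      simp [Fin.lt_def]
    rw [heq, Fin.card_Iio]

lemma numErasures_revFrom {t : ℕ} (htn : t ≤ n) (x : Fin n → X) :
    numErasures (revFrom t x) = t := by
  unfold numErasures
  have hiff : ∀ i ∈ (Finset.univ : Finset (Fin n)),
      (revFrom t x i = none ↔ (i : ℕ) < t) := by
    intro i _
    unfold revFrom
    by_cases h : t ≤ (i : ℕ)
    · rw [if_pos h]
      constructor
      · intro hc; exact absurd hc (by simp)
      · intro hc; omega
    · rw [if_neg h]
      constructor
      · intro _; omega
      · intro _; rfl
  rw [Finset.filter_congr hiff, card_filter_lt htn]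

lemma numErasures_allNone : numErasures (fun _ => (none : Option X) : Fin n → Option X) = n := by
  unfold numErasures
  rw [Finset.filter_true_of_mem (fun i _ => rfl), Finset.card_univ, Fintype.card_fin]

lemma sum_p_pf (hp0 : ∀ x, 0 ≤ p x) (hp1 : ∑ x : Fin n → X, p x = 1) (hM : IsMarkov p)
    (d : X) {t : ℕ} (ht : t < n) :
    ∑ x : Fin n → X, p x * pf hn p (t + 1) x = 1 - ∑ a : X, mm hn p t a := by
  rw [fiber_sum ⟨0, hn⟩ (fun x => p x * pf hn p (t + 1) x),
    Finset.sum_congr rfl (fun u _ => keyL_total hn p hp0 hp1 hM d ht u),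
    ← Finset.sum_mul,
    show (∑ u : X, P1 hn p u) = 1 from sum_prOne hp1 ⟨0, hn⟩, one_mul]

lemma rate_calc (hp0 : ∀ x, 0 ≤ p x) (hp1 : ∑ x : Fin n → X, p x = 1) (hM : IsMarkov p)
    (d : X) :
    ∑ x : Fin n → X, ∑ y : Fin n → Option X, p x * Wm hn p x y * (numErasures y : ℝ)
      = n - ∑ t ∈ Finset.range n, ∑ a : X, mm hn p t a := by
  have hy : ∀ x : Fin n → X,
      (∑ y : Fin n → Option X, p x * Wm hn p x y * (numErasures y : ℝ))
        = p x * ∑ t ∈ Finset.range n, pf hn p (t + 1) x := by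
    intro x
    have expand : ∀ y : Fin n → Option X,
        p x * Wm hn p x y * (numErasures y : ℝ)
          = (∑ t ∈ Finset.range n,
              if y = revFrom t x then
                p x * (pf hn p t x * rho hn p t x) * (numErasures y : ℝ) else 0)
            + (if y = (fun _ => none) then p x * pf hn p n x * (numErasures y : ℝ) else 0) := by
      intro y
      unfold Wm
      rw [mul_add, add_mul, Finset.mul_sum, Finset.sum_mul]
      congr 1
      · apply Finset.sum_congr rfl
        intro t _
        rw [mul_ite, mul_zero, ite_mul, zero_mul]
      · rw [mul_ite, mul_zero, ite_mul, zero_mul]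
    rw [Finset.sum_congr rfl (fun y _ => expand y), Finset.sum_add_distrib, Finset.sum_comm]
    have h1 : ∀ t ∈ Finset.range n,
        (∑ y : Fin n → Option X,
          if y = revFrom t x then
            p x * (pf hn p t x * rho hn p t x) * (numErasures y : ℝ) else 0)
        = p x * (pf hn p t x - pf hn p (t + 1) x) * (t : ℝ) := by
      intro t htmem
      rw [Finset.sum_ite_eq' Finset.univ (revFrom t x)
        (fun y => p x * (pf hn p t x * rho hn p t x) * (numErasures y : ℝ))]
      simp only [Finset.mem_univ, if_true]
      rw [numErasures_revFrom (le_of_lt (Finset.mem_range.mp htmem)) x, pf_step hn p x t]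
    have h2 : (∑ y : Fin n → Option X,
        if y = (fun _ => none) then p x * pf hn p n x * (numErasures y : ℝ) else 0)
        = p x * pf hn p n x * (n : ℝ) := by
      rw [Finset.sum_ite_eq' Finset.univ (fun _ => (none : Option X))
        (fun y => p x * pf hn p n x * (numErasures y : ℝ))]
      simp only [Finset.mem_univ, if_true]
      rw [numErasures_allNone]
    rw [Finset.sum_congr rfl h1, h2]
    have habel : ∑ t ∈ Finset.range n, p x * (pf hn p t x - pf hn p (t + 1) x) * (t : ℝ)
        = (∑ t ∈ Finset.range n,
            ((fun (k : ℕ) => (k : ℝ) * (p x * pf hn p k x)) t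
              - (fun (k : ℕ) => (k : ℝ) * (p x * pf hn p k x)) (t + 1)))
          + ∑ t ∈ Finset.range n, p x * pf hn p (t + 1) x := by
      rw [← Finset.sum_add_distrib]
      apply Finset.sum_congr rfl
      intro t _
      push_cast
      ring
    rw [habel, Finset.sum_range_sub' (fun (k : ℕ) => (k : ℝ) * (p x * pf hn p k x)) n,
      Finset.mul_sum]
    push_cast
    ring
  rw [Finset.sum_congr rfl (fun x _ => hy x)]
  have h3 : ∀ t ∈ Finset.range n,
      (∑ x : Fin n → X, p x * pf hn p (t + 1) x) = 1 - ∑ a : X, mm hn p t a := by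
    intro t htmem
    exact sum_p_pf hn p hp0 hp1 hM d (Finset.mem_range.mp htmem)
  have hswap : ∑ x : Fin n → X, p x * ∑ t ∈ Finset.range n, pf hn p (t + 1) x
      = ∑ t ∈ Finset.range n, ∑ x : Fin n → X, p x * pf hn p (t + 1) x := by
    rw [← Finset.sum_comm]
    apply Finset.sum_congr rfl
    intro x _
    rw [Finset.mul_sum]
  rw [hswap, Finset.sum_congr rfl h3, Finset.sum_sub_distrib]
  simp

end Assemble


/-- Corollary, Markov chain: if `X_1, …, X_n` is a Markov chain and the only
sensitive position is the first one (`K = {1}`, one-based; `i₀ = 0`, zero-based), then a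
rate `R` is achievable — i.e. some faithful private mechanism has rate at least `R` —
if and only if `R ≤ (1/n) ∑_i ∑_a min_u P(X_i = a | X_1 = u)`. -/
theorem markov_capacity {n : ℕ} (hn : 1 ≤ n) (hX : 2 ≤ Fintype.card X)
    (p : (Fin n → X) → ℝ) (hp0 : ∀ x, 0 ≤ p x) (hp1 : ∑ x : Fin n → X, p x = 1)
    (hMarkov : IsMarkov p) (R : ℝ) :
    (∃ w : (Fin n → X) → (Fin n → Option X) → ℝ,
      (∀ x y, 0 ≤ w x y) ∧ (∀ x, ∑ y : Fin n → Option X, w x y = 1) ∧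
      -- faithfulness
      (∀ x y, 0 < w x y → ∀ i : Fin n, y i = some (x i) ∨ y i = none) ∧
      -- privacy: `Y` independent of `X_1`
      (∀ (u : X) (y : Fin n → Option X),
        (∑ x : Fin n → X, if x ⟨0, hn⟩ = u then p x * w x y else 0)
          = prOne p ⟨0, hn⟩ u * ∑ x : Fin n → X, p x * w x y) ∧
      -- rate at least `R`
      R ≤ 1 - (1 / (n : ℝ)) *
            ∑ x : Fin n → X, ∑ y : Fin n → Option X,
              p x * w x y * (numErasures y : ℝ))
    ↔ R ≤ (1 / (n : ℝ)) * ∑ i : Fin n, ∑ a : X, minCondMC p ⟨0, hn⟩ i a := by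
  have hnR : (0:ℝ) < (n : ℝ) := by
    have : 0 < n := by omega
    exact_mod_cast this
  constructor
  · -- converse
    rintro ⟨w, hw0, hw1, hwf, hwp, hwr⟩
    set S : (Fin n → Option X) → ℝ := fun y => ∑ x : Fin n → X, p x * w x y with hSdef
    set V : Fin n → X → ℝ :=
      fun i a => ∑ y : Fin n → Option X, if y i = some a then S y else 0 with hVdef
    set E : ℝ := ∑ x : Fin n → X, ∑ y : Fin n → Option X,
        p x * w x y * (numErasures y : ℝ) with hEdef
    -- each V i a is bounded by the min conditional
    have hVle : ∀ (i : Fin n) (a : X), V i a ≤ minCondMC p ⟨0, hn⟩ i a := by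
      intro i a
      apply le_minCondMC hp0 hp1
      intro u hu
      have hpriv : (∑ y : Fin n → Option X,
          if y i = some a then (∑ x : Fin n → X, if x ⟨0, hn⟩ = u then p x * w x y else 0) else 0)
          = prOne p ⟨0, hn⟩ u * V i a := by
        simp only [hVdef, Finset.mul_sum]
        apply Finset.sum_congr rfl
        intro y _
        by_cases hyi : y i = some a
        · rw [if_pos hyi, if_pos hyi, hwp u y]
        · rw [if_neg hyi, if_neg hyi, mul_zero]
      have hL : (∑ y : Fin n → Option X,
          if y i = some a then (∑ x : Fin n → X, if x ⟨0, hn⟩ = u then p x * w x y else 0) else 0)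
          ≤ prTwo p ⟨0, hn⟩ i u a := by
        have hpush : ∀ y : Fin n → Option X,
            (if y i = some a then (∑ x : Fin n → X, if x ⟨0, hn⟩ = u then p x * w x y else 0) else 0)
              = ∑ x : Fin n → X,
                  (if y i = some a then (if x ⟨0, hn⟩ = u then p x * w x y else 0) else 0) := by
          intro y
          by_cases hyi : y i = some a
          · rw [if_pos hyi]
            exact Finset.sum_congr rfl (fun x _ => by rw [if_pos hyi])
          · rw [if_neg hyi]
            exact (Finset.sum_eq_zero (fun x _ => by rw [if_neg hyi])).symm
        rw [Finset.sum_congr rfl (fun y _ => hpush y), Finset.sum_comm]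
        unfold prTwo
        apply Finset.sum_le_sum
        intro x _
        by_cases hxu : x ⟨0, hn⟩ = u
        · by_cases hxa : x i = a
          · rw [if_pos ⟨hxu, hxa⟩]
            calc ∑ y : Fin n → Option X,
                (if y i = some a then (if x ⟨0, hn⟩ = u then p x * w x y else 0) else 0)
                ≤ ∑ y : Fin n → Option X, p x * w x y := by
                  apply Finset.sum_le_sum
                  intro y _
                  by_cases hyi : y i = some a
                  · rw [if_pos hyi, if_pos hxu]
                  · rw [if_neg hyi]
                    exact mul_nonneg (hp0 x) (hw0 x y)
              _ = p x := by rw [← Finset.mul_sum, hw1 x, mul_one]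
          · rw [if_neg (by tauto)]
            apply le_of_eq
            apply Finset.sum_eq_zero
            intro y _
            by_cases hyi : y i = some a
            · rw [if_pos hyi, if_pos hxu]
              have hwz : w x y = 0 := by
                by_contra hne
                have hpos := lt_of_le_of_ne (hw0 x y) (Ne.symm hne)
                rcases hwf x y hpos i with hh | hh
                · rw [hyi] at hh
                  exact hxa (Option.some.injEq .. ▸ hh.symm : x i = a)
                · rw [hyi] at hh
                  exact Option.some_ne_none _ hh
              rw [hwz, mul_zero]
            · rw [if_neg hyi]
        · rw [if_neg (by tauto)]
          apply le_of_eq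
          apply Finset.sum_eq_zero
          intro y _
          by_cases hyi : y i = some a
          · rw [if_pos hyi, if_neg hxu]
          · rw [if_neg hyi]
      rw [hpriv] at hL
      rw [le_div_iff₀ hu]
      linarith [hL]
    -- counting revealed coordinates
    have hcount : ∀ y : Fin n → Option X,
        (∑ i : Fin n, ∑ a : X, if y i = some a then (1:ℝ) else 0)
          = (n : ℝ) - (numErasures y : ℝ) := by
      intro y
      have hinner : ∀ i : Fin n,
          (∑ a : X, if y i = some a then (1:ℝ) else 0) = if y i = none then 0 else 1 := by
        intro i
        cases hyi : y i with
        | none =>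
          rw [if_pos rfl]
          apply Finset.sum_eq_zero
          intro a _
          rw [if_neg (by simp)]
        | some b =>
          rw [if_neg (by simp)]
          have hco : ∀ a : X, (if some b = some a then (1:ℝ) else 0)
              = if b = a then (1:ℝ) else 0 :=
            fun a => if_congr (by simp) rfl rfl
          rw [Finset.sum_congr rfl (fun a _ => hco a),
            Finset.sum_ite_eq Finset.univ b (fun _ => (1:ℝ))]
          simp
      rw [Finset.sum_congr rfl (fun i _ => hinner i)]
      have hsplit := Finset.card_filter_add_card_filter_not
        (s := (Finset.univ : Finset (Fin n))) (p := fun i => y i = none)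
      have hcardn : ((Finset.univ : Finset (Fin n)).filter (fun i => ¬(y i = none))).card
          = n - numErasures y := by
        have hcu : (Finset.univ : Finset (Fin n)).card = n := by
          rw [Finset.card_univ, Fintype.card_fin]
        unfold numErasures
        omega
      have hrw : ∀ i : Fin n, (if y i = none then (0:ℝ) else 1) = if ¬(y i = none) then (1:ℝ) else 0 := by
        intro i
        by_cases hyi : y i = none <;> simp [hyi]
      rw [Finset.sum_congr rfl (fun i _ => hrw i), Finset.sum_boole, hcardn]
      have hle : numErasures y ≤ n := by
        have := Finset.card_filter_le (Finset.univ : Finset (Fin n)) (fun i => y i = none)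
        unfold numErasures
        simpa [Finset.card_univ] using this
      push_cast [hle]
      ring
    -- total: sum of V equals expected number of revealed coordinates
    have hsum : ∑ i : Fin n, ∑ a : X, V i a = (n : ℝ) - E := by
      have h1 : ∀ (i : Fin n) (a : X), V i a
          = ∑ y : Fin n → Option X, S y * (if y i = some a then (1:ℝ) else 0) := by
        intro i a
        simp only [hVdef]
        apply Finset.sum_congr rfl
        intro y _
        by_cases hyi : y i = some a <;> simp [hyi]
      have h2 : ∑ i : Fin n, ∑ a : X, V i a
          = ∑ y : Fin n → Option X, S y * ((n : ℝ) - (numErasures y : ℝ)) := by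
        rw [Finset.sum_congr rfl (fun i (_ : i ∈ Finset.univ) =>
          Finset.sum_congr rfl (fun a _ => h1 i a))]
        rw [Finset.sum_congr rfl (fun i (_ : i ∈ Finset.univ) =>
          Finset.sum_comm (s := Finset.univ) (t := Finset.univ)
            (f := fun a y => S y * if y i = some a then (1:ℝ) else 0)),
          Finset.sum_comm]
        apply Finset.sum_congr rfl
        intro y _
        rw [← hcount y, Finset.mul_sum]
        apply Finset.sum_congr rfl
        intro i _
        rw [Finset.mul_sum]
      have hSone : ∑ y : Fin n → Option X, S y = 1 := by
        simp only [hSdef]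
        rw [Finset.sum_comm]
        rw [Finset.sum_congr rfl (fun x (_ : x ∈ Finset.univ) => by
          rw [← Finset.mul_sum, hw1 x, mul_one])]
        exact hp1
      have hE2 : ∑ y : Fin n → Option X, S y * (numErasures y : ℝ) = E := by
        simp only [hSdef, hEdef]
        rw [Finset.sum_comm]
        apply Finset.sum_congr rfl
        intro y _
        rw [Finset.sum_mul]
      rw [h2]
      calc ∑ y : Fin n → Option X, S y * ((n : ℝ) - (numErasures y : ℝ))
          = (n : ℝ) * (∑ y : Fin n → Option X, S y)
            - ∑ y : Fin n → Option X, S y * (numErasures y : ℝ) := by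
            rw [Finset.mul_sum, ← Finset.sum_sub_distrib]
            apply Finset.sum_congr rfl
            intro y _
            ring
        _ = (n : ℝ) - E := by rw [hSone, hE2, mul_one]
    -- conclude
    have hbound : (n : ℝ) - E ≤ ∑ i : Fin n, ∑ a : X, minCondMC p ⟨0, hn⟩ i a := by
      rw [← hsum]
      apply Finset.sum_le_sum
      intro i _
      apply Finset.sum_le_sum
      intro a _
      exact hVle i a
    calc R ≤ 1 - (1 / (n:ℝ)) * E := hwr
      _ = ((n:ℝ) - E) / n := by field_simp
      _ ≤ (∑ i : Fin n, ∑ a : X, minCondMC p ⟨0, hn⟩ i a) / n := by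
          gcongr
      _ = (1 / (n:ℝ)) * ∑ i : Fin n, ∑ a : X, minCondMC p ⟨0, hn⟩ i a := by ring
  · -- achievability
    intro hR
    have hXne : Nonempty X := Fintype.card_pos_iff.mp (by omega)
    set d : X := Classical.arbitrary X with hd
    refine ⟨Wm hn p, Wm_nonneg hn p hp0, Wm_sum_one hn p, Wm_faithful hn p, ?_, ?_⟩
    · intro u y
      rw [priv_main hn p hp0 hp1 hMarkov d u y, marginal_main hn p hp0 hp1 hMarkov d y]
      rfl
    · rw [rate_calc hn p hp0 hp1 hMarkov d]
      have hSeq : ∑ i : Fin n, ∑ a : X, minCondMC p ⟨0, hn⟩ i a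
          = ∑ t ∈ Finset.range n, ∑ a : X, mm hn p t a := by
        rw [← Fin.sum_univ_eq_sum_range (fun t => ∑ a : X, mm hn p t a) n]
        apply Finset.sum_congr rfl
        intro i _
        apply Finset.sum_congr rfl
        intro a _
        show minCondMC p ⟨0, hn⟩ i a = mm hn p (i : ℕ) a
        unfold mm
        rw [dif_pos i.isLt]
      set Ssum : ℝ := ∑ t ∈ Finset.range n, ∑ a : X, mm hn p t a with hSsum
      have hcalc : 1 - (1/(n:ℝ)) * ((n:ℝ) - Ssum) = (1/(n:ℝ)) * Ssum := by
        field_simp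
        ring
      rw [hcalc]
      rw [hSeq] at hR
      exact hR

end GenotypeHiding
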